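/- There is a sequent over the one-step logic of the modality ♥ (with ⟦♥⟧_X(f)(U) = sup{f(x) | x ∈ U, f(x) ≠ 1}) that is satisfiable in an infinite one-step model but not in any finite one: the constraint ⟦♥v⟧ = 1 is satisfiable by some infinite set U with valuation f, but for every finite set X, every U ⊆ X, and every f : X → [0,1], sup{f(x) | x ∈ U, f(x) ≠ 1} < 1. -/
import Mathlib


/-- The one-step logic of `⟦♥⟧_X(f)(U) = sup { f x | x ∈ U, f x ≠ 1 }` is not
one-step exponentially bounded: the constraint `⟦♥v⟧ = 1` is satisfiable in an
infinite one-step model but in no finite one. -/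
theorem stmt5 :
    (∃ (X : Type) (U : Set X) (f : X → ℝ), Infinite X ∧
      (∀ x, f x ∈ Set.Icc (0:ℝ) 1) ∧
      sSup {r : ℝ | ∃ x ∈ U, f x ≠ 1 ∧ r = f x} = 1) ∧
    (∀ (X : Type), Finite X → ∀ (U : Set X) (f : X → ℝ),
      (∀ x, f x ∈ Set.Icc (0:ℝ) 1) →
      sSup {r : ℝ | ∃ x ∈ U, f x ≠ 1 ∧ r = f x} < 1) := by
  constructor
  · refine ⟨ℕ, Set.univ, fun n => 1 - 1 / (n + 1), inferInstance, ?_, ?_⟩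
    · intro n
      have h1 : (0:ℝ) < (n:ℝ) + 1 := by positivity
      constructor
      · have : 1 / ((n:ℝ) + 1) ≤ 1 := by
          rw [div_le_one h1]; linarith
        linarith
      · have : 0 < 1 / ((n:ℝ) + 1) := by positivity
        linarith
    · apply IsLUB.csSup_eq
      · constructor
        · rintro r ⟨n, -, -, rfl⟩
          have : 0 < 1 / ((n:ℝ) + 1) := by positivity
          linarith
        · intro b hb
          by_contra h
          push_neg at h
          obtain ⟨n, hn⟩ := exists_nat_one_div_lt (show (0:ℝ) < 1 - b by linarith)
          have hmem : (1 - 1 / ((n:ℝ) + 1)) ∈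
              {r : ℝ | ∃ x ∈ (Set.univ : Set ℕ), (1 - 1/((x:ℝ)+1)) ≠ 1 ∧ r = 1 - 1/((x:ℝ)+1)} := by
            refine ⟨n, Set.mem_univ n, ?_, rfl⟩
            have : 0 < 1 / ((n:ℝ) + 1) := by positivity
            intro h'; linarith
          have := hb hmem
          linarith
      · exact ⟨1 - 1/((0:ℕ)+1), 0, Set.mem_univ 0, by norm_num, by norm_num⟩
  · intro X _ U f hf
    set S := {r : ℝ | ∃ x ∈ U, f x ≠ 1 ∧ r = f x} with hS
    have hfin : S.Finite := by
      apply (Set.finite_range f).subset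
      rintro r ⟨x, -, -, rfl⟩; exact ⟨x, rfl⟩
    rcases S.eq_empty_or_nonempty with h | h
    · rw [h, Real.sSup_empty]; norm_num
    · have hmem := h.csSup_mem hfin
      obtain ⟨x, -, hne, heq⟩ := hmem
      rw [heq]
      exact lt_of_le_of_ne (hf x).2 hne
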